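/- The subgames T1 and T2 partition the set of arrival pairs and are fully independent with respect to the players' information: T1 ∩ T2 = ∅, T1 ∪ T2 = T, and no arrival pair in T1 is indistinguishable from an arrival pair in T2 for either player, i.e., for all (t1, t2) ∈ T1 and (t1', t2') ∈ T2, it holds that t1 ≠ t1' and t2 ≠ t2'. -/

import Mathlib

/-- The two actions: `c` (canteen) and `o` (office). -/
inductive Act : Type
  | c : Act
  | o : Act
deriving DecidableEq

open Act

/-- The set of arrival pairs
`T = {(k, k+1) : kmin ≤ k ≤ kmax - 1} ∪ {(k, k-1) : kmin + 1 ≤ k ≤ kmax}`. -/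
noncomputable def T (kmin kmax : ℤ) : Finset (ℤ × ℤ) :=
  ((Finset.Icc kmin (kmax - 1)).image (fun k => (k, k + 1))) ∪
  ((Finset.Icc (kmin + 1) kmax).image (fun k => (k, k - 1)))

/-- Subgame `T1 = {(t1,t2) ∈ T : t1 ≡ kmin (mod 2)}`. -/
noncomputable def T1 (kmin kmax : ℤ) : Finset (ℤ × ℤ) :=
  (T kmin kmax).filter (fun t => t.1 % 2 = kmin % 2)

/-- Subgame `T2 = {(t1,t2) ∈ T : t2 ≡ kmin (mod 2)}`. -/
noncomputable def T2 (kmin kmax : ℤ) : Finset (ℤ × ℤ) :=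
  (T kmin kmax).filter (fun t => t.2 % 2 = kmin % 2)

/-- The expected utility of profile `s` over a set `S` of arrival pairs:
`EU_S(s) = (1/|S|) · Σ_{(t1,t2) ∈ S} u_{(t1,t2)}(s_1(t1), s_2(t2))`. -/
noncomputable def EU (u : ℤ × ℤ → Act → Act → ℝ) (s : (ℤ → Act) × (ℤ → Act))
    (S : Finset (ℤ × ℤ)) : ℝ :=
  (∑ t ∈ S, u t (s.1 t.1) (s.2 t.2)) / S.card

/-- `s` is Pareto optimal over `S` if no profile `s'` has `EU_S(s') > EU_S(s)`. -/
def ParetoOptimal (u : ℤ × ℤ → Act → Act → ℝ) (S : Finset (ℤ × ℤ))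
    (s : (ℤ → Act) × (ℤ → Act)) : Prop :=
  ¬ ∃ s' : (ℤ → Act) × (ℤ → Act), EU u s' S > EU u s S

/-- `u` satisfies conditions (U1) and (U2) on the arrival pairs of `T`. -/
def SatisfiesU1U2 (kmin kmax N : ℤ) (u : ℤ × ℤ → Act → Act → ℝ) : Prop :=
  ∀ t ∈ T kmin kmax,
    (t.1 < N ∧ t.2 < N →
      u t c c > u t o o ∧ u t o o > u t c o ∧ u t c o = u t o c) ∧
    (N ≤ t.1 ∨ N ≤ t.2 →
      u t o o > u t c o ∧ u t c o = u t o c ∧ u t o c = u t c c)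

/-- `u` is uniform with values `A > B > C` (the order is assumed separately). -/
def Uniform (kmin kmax N : ℤ) (u : ℤ × ℤ → Act → Act → ℝ) (A B C : ℝ) : Prop :=
  ∀ t ∈ T kmin kmax,
    (t.1 < N ∧ t.2 < N →
      u t c c = A ∧ u t o o = B ∧ u t c o = C ∧ u t o c = C) ∧
    (N ≤ t.1 ∨ N ≤ t.2 →
      u t o o = B ∧ u t c c = C ∧ u t c o = C ∧ u t o c = C)

/-- The cut-off strategy with cut-off `m`: canteen iff arriving strictly before `m`. -/
def cutoff (m : ℤ) : ℤ → Act := fun k => if k < m then c else o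

/-- The all-office strategy. -/
def allOffice : ℤ → Act := fun _ => o


lemma mem_T_diff {kmin kmax : ℤ} {t : ℤ × ℤ} (h : t ∈ T kmin kmax) :
    t.2 = t.1 + 1 ∨ t.2 = t.1 - 1 := by
  simp only [T, Finset.mem_union, Finset.mem_image, Finset.mem_Icc] at h
  rcases h with ⟨k, _, hk⟩ | ⟨k, _, hk⟩ <;>
    [left; right] <;> rw [← hk]

/-- `T1` and `T2` partition `T` and are fully independent with respect to
the players' information. -/
theorem stmt_5 (kmin kmax N : ℤ) (h1 : kmin < N) (h2 : N ≤ kmax) :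
    (T1 kmin kmax ∩ T2 kmin kmax = ∅) ∧
    (T1 kmin kmax ∪ T2 kmin kmax = T kmin kmax) ∧
    (∀ t ∈ T1 kmin kmax, ∀ t' ∈ T2 kmin kmax, t.1 ≠ t'.1 ∧ t.2 ≠ t'.2) := by
  refine ⟨?_, ?_, ?_⟩
  · ext t
    simp only [T1, T2, Finset.mem_inter, Finset.mem_filter, Finset.notMem_empty, iff_false]
    rintro ⟨⟨hT, h1'⟩, _, h2'⟩
    rcases mem_T_diff hT with h | h <;> omega
  · ext t
    simp only [T1, T2, Finset.mem_union, Finset.mem_filter]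
    constructor
    · rintro (⟨h, _⟩ | ⟨h, _⟩) <;> exact h
    · intro h
      rcases mem_T_diff h with hd | hd <;>
        rcases Int.even_or_odd (t.1 - kmin) with he | ho
      · exact Or.inl ⟨h, by obtain ⟨r, hr⟩ := he; omega⟩
      · exact Or.inr ⟨h, by obtain ⟨r, hr⟩ := ho; omega⟩
      · exact Or.inl ⟨h, by obtain ⟨r, hr⟩ := he; omega⟩
      · exact Or.inr ⟨h, by obtain ⟨r, hr⟩ := ho; omega⟩
  · intro t ht t' ht'
    simp only [T1, Finset.mem_filter] at ht
    simp only [T2, Finset.mem_filter] at ht'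
    obtain ⟨hT, hp⟩ := ht
    obtain ⟨hT', hp'⟩ := ht'
    rcases mem_T_diff hT with h | h <;> rcases mem_T_diff hT' with h' | h' <;>
      exact ⟨by omega, by omega⟩
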